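/- The trivial group is acyclically closed, and a (possibly infinite) direct product of acyclically closed groups is acyclically closed. -/
import Mathlib


open Monoid

/-- The projection `G ∗ F_n → H₁(F_n)` killing `G`; a monomial is *acyclic*
if it lies in its kernel. -/
def acyProj (G : Type*) [Group G] (n : ℕ) :
    Coprod G (FreeGroup (Fin n)) →* Abelianization (FreeGroup (Fin n)) :=
  Coprod.lift 1 Abelianization.of

/-- An *acyclic system* over `G`: equations `x_i = w_i(x_1,…,x_n)` with each
monomial `w_i ∈ G ∗ F_n` acyclic. -/
def IsAcyclicSystem {G : Type*} [Group G] {n : ℕ}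
    (w : Fin n → Coprod G (FreeGroup (Fin n))) : Prop :=
  ∀ i, acyProj G n (w i) = 1

/-- Substitution of values `g : Fin n → G` for the variables in a monomial. -/
def acyEval {G : Type*} [Group G] {n : ℕ} (g : Fin n → G) :
    Coprod G (FreeGroup (Fin n)) →* G :=
  Coprod.lift (MonoidHom.id G) (FreeGroup.lift g)

/-- `g` is a solution of the system `x_i = w_i`. -/
def IsSolution {G : Type*} [Group G] {n : ℕ}
    (w : Fin n → Coprod G (FreeGroup (Fin n))) (g : Fin n → G) : Prop :=
  ∀ i, acyEval g (w i) = g i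

/-- A group is *acyclically closed* if every acyclic system over it has a
unique solution. -/
def AcyclicallyClosed (G : Type*) [Group G] : Prop :=
  ∀ (n : ℕ) (w : Fin n → Coprod G (FreeGroup (Fin n))),
    IsAcyclicSystem w → ∃! g : Fin n → G, IsSolution w g

/-- Pushing a monomial forward along a group hom. -/
lemma acyEval_map {G H : Type*} [Group G] [Group H] (φ : G →* H) {n : ℕ}
    (g : Fin n → G) :
    (acyEval (fun j => φ (g j))).comp
      (Coprod.map φ (MonoidHom.id (FreeGroup (Fin n)))) = φ.comp (acyEval g) := by
  apply Coprod.hom_ext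
  · ext x
    simp [acyEval, Coprod.map]
  · ext x
    simp [acyEval, Coprod.map]

lemma acyProj_map {G H : Type*} [Group G] [Group H] (φ : G →* H) (n : ℕ) :
    (acyProj H n).comp (Coprod.map φ (MonoidHom.id (FreeGroup (Fin n)))) =
      acyProj G n := by
  apply Coprod.hom_ext
  · ext x
    simp [acyProj, Coprod.map]
  · ext x
    simp [acyProj, Coprod.map]

/-- The trivial group is acyclically closed, and any direct product of
acyclically closed groups is acyclically closed. -/
theorem trivial_and_prod_acyclicallyClosed :
    (∀ (G : Type) [Group G], Subsingleton G → AcyclicallyClosed G) ∧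
    (∀ (ι : Type) (G : ι → Type) [∀ i, Group (G i)],
        (∀ i, AcyclicallyClosed (G i)) → AcyclicallyClosed (∀ i, G i)) := by
  constructor
  · intro G _ hsub n w _
    refine ⟨fun _ => 1, fun i => Subsingleton.elim _ _, fun g' _ => ?_⟩
    funext j; exact Subsingleton.elim _ _
  · intro ι G _ hAC n w hw
    -- component systems
    set wc := fun (i : ι) (j : Fin n) =>
      Coprod.map (Pi.evalMonoidHom G i) (MonoidHom.id (FreeGroup (Fin n))) (w j)
      with hwc
    have hwcAc : ∀ i, IsAcyclicSystem (wc i) := by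
      intro i j
      have := congrArg (fun f : Coprod (∀ i, G i) (FreeGroup (Fin n)) →*
          Abelianization (FreeGroup (Fin n)) => f (w j))
        (acyProj_map (Pi.evalMonoidHom G i) n)
      simpa [wc] using this.trans (hw j)
    -- key compatibility
    have key : ∀ (g : Fin n → ∀ i, G i) (i : ι) (x : Coprod (∀ i, G i) (FreeGroup (Fin n))),
        acyEval (fun j => g j i)
          (Coprod.map (Pi.evalMonoidHom G i) (MonoidHom.id (FreeGroup (Fin n))) x) =
        acyEval g x i := by
      intro g i x
      exact congrArg (fun f : Coprod (∀ i, G i) (FreeGroup (Fin n)) →* G i => f x)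
        (acyEval_map (Pi.evalMonoidHom G i) g)
    have sol_iff : ∀ g : Fin n → ∀ i, G i,
        IsSolution w g ↔ ∀ i, IsSolution (wc i) (fun j => g j i) := by
      intro g
      constructor
      · intro hg i j
        rw [hwc]; rw [key g i (w j), hg j]
      · intro h j
        funext i
        have := h i j
        rwa [hwc, key g i (w j)] at this
    choose s hs hsu using fun i => hAC i n (wc i) (hwcAc i)
    refine ⟨fun j i => s i j, ?_, ?_⟩
    · exact (sol_iff _).2 fun i => hs i
    · intro g' hg'
      have := (sol_iff g').1 hg'
      funext j; funext i
      exact congrFun (hsu i _ (this i)) j
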